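/- (Double coset identity from the proof of Lemma 2.21, GL_n case: 𝒫h₁𝒫h₂𝒫 = 𝒫h₁h₂𝒫.) Fix a block function b : {1,…,n} → {1,…,r} and let 𝒫 = {g ∈ GL_n(ℤ_p) : g_{ij} ∈ pℤ_p whenever b(i) > b(j)} be the associated parahoric subgroup. Let μ₁, μ₂ : {1,…,n} → ℤ be antidominant and constant on blocks (μ_a(i) = μ_a(i') whenever b(i) = b(i')), and set h₁ = t_{μ₁}, h₂ = t_{μ₂}. Then, as subsets of GL_n(ℚ_p), the set product 𝒫·h₁·𝒫·h₂·𝒫 equals 𝒫·h₁h₂·𝒫. -/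

import Mathlib

open Pointwise

/-- The diagonal matrix `t_μ = diag(p^{μ 0}, …, p^{μ (n-1)})` over `ℚ_p`. -/
noncomputable def tdiag (p : ℕ) [Fact p.Prime] {n : ℕ} (μ : Fin n → ℤ) :
    Matrix (Fin n) (Fin n) ℚ_[p] :=
  Matrix.diagonal fun i => (p : ℚ_[p]) ^ (μ i)

/-- The parahoric subgroup `𝒫` attached to a block function `b`, as a set of matrices
over `ℚ_p`: elements of `GL_n(ℤ_p)` whose below-block entries lie in `pℤ_p`. -/
def Parahoric (p : ℕ) [Fact p.Prime] {n r : ℕ} (b : Fin n → Fin r) :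
    Set (Matrix (Fin n) (Fin n) ℚ_[p]) :=
  {g | (∀ i j, ‖g i j‖ ≤ 1) ∧ ‖g.det‖ = 1 ∧ ∀ i j, b j < b i → ‖g i j‖ ≤ (p : ℝ)⁻¹}

namespace S7

variable (p : ℕ) [Fact p.Prime]

/-- block lower triangular -/
def BL {n r : ℕ} (b : Fin n → Fin r) (g : Matrix (Fin n) (Fin n) ℚ_[p]) : Prop :=
  ∀ i j, b i < b j → g i j = 0

/-- block upper triangular -/
def BU {n r : ℕ} (b : Fin n → Fin r) (g : Matrix (Fin n) (Fin n) ℚ_[p]) : Prop :=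
  ∀ i j, b j < b i → g i j = 0

variable {p}

lemma norm_ultra_sub {x y : ℚ_[p]} {C : ℝ} (hx : ‖x‖ ≤ C) (hy : ‖y‖ ≤ C) : ‖x - y‖ ≤ C := by
  rw [sub_eq_add_neg]
  exact (IsUltrametricDist.norm_add_le_max _ _).trans (max_le hx (by rwa [norm_neg]))

lemma det_norm_le_one {n : ℕ} {g : Matrix (Fin n) (Fin n) ℚ_[p]} (hg : ∀ i j, ‖g i j‖ ≤ 1) :
    ‖g.det‖ ≤ 1 := by
  rw [Matrix.det_apply]
  apply IsUltrametricDist.norm_sum_le_of_forall_le_of_nonneg zero_le_one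
  intro σ _
  have h1 : ‖∏ i, g (σ i) i‖ ≤ 1 := by
    rw [norm_prod]
    exact Finset.prod_le_one (fun i _ => norm_nonneg _) (fun i _ => hg _ _)
  rcases Int.units_eq_one_or (Equiv.Perm.sign σ) with h | h <;> rw [h] <;>
    simpa [Units.smul_def] using h1

variable {n r : ℕ} {b : Fin n → Fin r}

lemma one_mem : (1 : Matrix (Fin n) (Fin n) ℚ_[p]) ∈ Parahoric p b := by
  refine ⟨fun i j => ?_, by simp, fun i j hij => ?_⟩
  · rw [Matrix.one_apply]; split_ifs <;> simp
  · have hne : i ≠ j := fun h => absurd hij (by rw [h]; exact lt_irrefl _)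
    rw [Matrix.one_apply_ne hne]
    simp only [norm_zero]
    positivity

lemma mul_mem {u v : Matrix (Fin n) (Fin n) ℚ_[p]} (hu : u ∈ Parahoric p b)
    (hv : v ∈ Parahoric p b) : u * v ∈ Parahoric p b := by
  obtain ⟨hu1, hu2, hu3⟩ := hu
  obtain ⟨hv1, hv2, hv3⟩ := hv
  refine ⟨fun i j => ?_, ?_, fun i j hij => ?_⟩
  · rw [Matrix.mul_apply]
    apply IsUltrametricDist.norm_sum_le_of_forall_le_of_nonneg zero_le_one
    intro k _
    rw [norm_mul]
    simpa using mul_le_mul (hu1 i k) (hv1 k j) (norm_nonneg _) zero_le_one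
  · rw [Matrix.det_mul, norm_mul, hu2, hv2, one_mul]
  · rw [Matrix.mul_apply]
    apply IsUltrametricDist.norm_sum_le_of_forall_le_of_nonneg (by positivity)
    intro k _
    rw [norm_mul]
    rcases lt_or_ge (b k) (b i) with hk | hk
    · calc ‖u i k‖ * ‖v k j‖ ≤ (p:ℝ)⁻¹ * 1 :=
            mul_le_mul (hu3 i k hk) (hv1 k j) (norm_nonneg _) (by positivity)
        _ = (p:ℝ)⁻¹ := mul_one _
    · calc ‖u i k‖ * ‖v k j‖ ≤ 1 * (p:ℝ)⁻¹ :=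
            mul_le_mul (hu1 i k) (hv3 k j (lt_of_lt_of_le hij hk)) (norm_nonneg _) zero_le_one
        _ = (p:ℝ)⁻¹ := one_mul _

lemma BL.mul {L M : Matrix (Fin n) (Fin n) ℚ_[p]} (hL : BL p b L) (hM : BL p b M) :
    BL p b (L * M) := by
  intro i j hij
  rw [Matrix.mul_apply]
  apply Finset.sum_eq_zero
  intro k _
  rcases lt_or_ge (b i) (b k) with h | h
  · rw [hL i k h, zero_mul]
  · rw [hM k j (lt_of_le_of_lt h hij), mul_zero]


/-- matrix supported on column 0 -/
noncomputable def colMat {m : ℕ} (e : Fin (m+1) → ℚ_[p]) : Matrix (Fin (m+1)) (Fin (m+1)) ℚ_[p] :=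
  Matrix.of fun i j => if j = 0 then e i else 0

lemma colMat_apply {m : ℕ} (e : Fin (m+1) → ℚ_[p]) (i j) :
    colMat e i j = if j = 0 then e i else 0 := rfl

lemma colMat_mul_apply {m : ℕ} (e : Fin (m+1) → ℚ_[p]) (M : Matrix (Fin (m+1)) (Fin (m+1)) ℚ_[p])
    (i j) : (colMat e * M) i j = e i * M 0 j := by
  rw [Matrix.mul_apply, Finset.sum_eq_single (0 : Fin (m+1))]
  · simp [colMat_apply]
  · intro k _ hk; simp [colMat_apply, hk]
  · simp

/-- embed a matrix with new row 0 = (a, v) and zero column below a -/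
noncomputable def emb {m : ℕ} (a : ℚ_[p]) (v : Fin m → ℚ_[p]) (M : Matrix (Fin m) (Fin m) ℚ_[p]) :
    Matrix (Fin (m+1)) (Fin (m+1)) ℚ_[p] :=
  Matrix.of (Fin.cons (Fin.cons a v) (fun i => Fin.cons 0 (M i)))

@[simp] lemma emb_zero_zero {m : ℕ} (a : ℚ_[p]) (v : Fin m → ℚ_[p]) (M) :
    emb a v M 0 0 = a := rfl
@[simp] lemma emb_zero_succ {m : ℕ} (a : ℚ_[p]) (v : Fin m → ℚ_[p]) (M) (j : Fin m) :
    emb a v M 0 j.succ = v j := by simp [emb]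
@[simp] lemma emb_succ_zero {m : ℕ} (a : ℚ_[p]) (v : Fin m → ℚ_[p]) (M) (i : Fin m) :
    emb a v M i.succ 0 = 0 := by simp [emb]
@[simp] lemma emb_succ_succ {m : ℕ} (a : ℚ_[p]) (v : Fin m → ℚ_[p]) (M) (i j : Fin m) :
    emb a v M i.succ j.succ = M i j := by simp [emb]

lemma emb_det {m : ℕ} (a : ℚ_[p]) (v : Fin m → ℚ_[p]) (M) :
    (emb a v M).det = a * M.det := by
  rw [Matrix.det_succ_column_zero, Fin.sum_univ_succ]
  have h1 : (emb a v M).submatrix Fin.succ Fin.succ = M := by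
    ext i j; simp [Matrix.submatrix_apply]
  simp [Fin.succAbove_zero, h1]

lemma colMat_det {m : ℕ} (e : Fin (m+1) → ℚ_[p]) (he : e 0 = 0) :
    (1 + colMat e).det = 1 := by
  have h : (1 + colMat e).transpose = emb 1 (fun j => e j.succ) 1 := by
    ext i j
    rcases Fin.eq_zero_or_eq_succ i with rfl | ⟨i', rfl⟩ <;>
      rcases Fin.eq_zero_or_eq_succ j with rfl | ⟨j', rfl⟩ <;>
        simp [Matrix.transpose_apply, Matrix.add_apply, colMat_apply, Matrix.one_apply, he,
          Fin.succ_ne_zero, (Fin.succ_ne_zero _).symm, Fin.succ_inj, eq_comm]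
  rw [← Matrix.det_transpose, h, emb_det, Matrix.det_one, mul_one]

lemma colMat_mul_colMat {m : ℕ} (e f : Fin (m+1) → ℚ_[p]) (hf : f 0 = 0) :
    colMat e * colMat f = 0 := by
  ext i j
  rw [colMat_mul_apply, colMat_apply]
  split_ifs <;> simp [hf]

lemma one_add_colMat_mul {m : ℕ} (e : Fin (m+1) → ℚ_[p]) (he : e 0 = 0) :
    (1 + colMat e) * (1 + colMat (fun i => -e i)) = 1 := by
  rw [mul_add, add_mul, add_mul, Matrix.one_mul, Matrix.mul_one,
    colMat_mul_colMat _ _ (by simp [he])]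
  ext i j
  simp only [Matrix.add_apply, Matrix.zero_apply, colMat_apply, Matrix.one_mul]
  split_ifs <;> ring


lemma pinv_lt_one : (p:ℝ)⁻¹ < 1 := by
  have hp1 : 1 < (p:ℝ) := by exact_mod_cast (Fact.out : p.Prime).one_lt
  rw [inv_lt_one_iff₀]; right; exact hp1

lemma norm_lt_one_le {x : ℚ_[p]} (h1 : ‖x‖ ≤ 1) (h2 : ‖x‖ ≠ 1) : ‖x‖ ≤ (p:ℝ)⁻¹ := by
  have hlt : ‖x‖ < 1 := lt_of_le_of_ne h1 h2
  have := (Padic.norm_le_pow_iff_norm_lt_pow_add_one x (-1)).2 (by norm_num; exact hlt)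
  simpa [zpow_neg_one] using this

lemma pivot {m : ℕ} {b : Fin (m+1) → Fin r} (hb : Monotone b)
    {g : Matrix (Fin (m+1)) (Fin (m+1)) ℚ_[p]} (hg : g ∈ Parahoric p b) :
    ∃ k, b k = b 0 ∧ ‖g k 0‖ = 1 := by
  by_contra hcon
  push_neg at hcon
  have key : ∀ k, ‖g k 0‖ ≤ (p:ℝ)⁻¹ := by
    intro k
    have hb0 : b 0 ≤ b k := hb (Fin.zero_le k)
    rcases eq_or_lt_of_le hb0 with heq | hlt
    · exact norm_lt_one_le (hg.1 k 0) (hcon k heq.symm)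
    · exact hg.2.2 k 0 hlt
  have hd : ‖g.det‖ ≤ (p:ℝ)⁻¹ := by
    rw [Matrix.det_succ_column_zero]
    apply IsUltrametricDist.norm_sum_le_of_forall_le_of_nonneg (by positivity)
    intro i _
    rw [norm_mul, norm_mul]
    have h1 : ‖(-1 : ℚ_[p]) ^ (i:ℕ)‖ = 1 := by simp
    rw [h1, one_mul]
    have h2 : ‖(g.submatrix i.succAbove Fin.succ).det‖ ≤ 1 :=
      det_norm_le_one fun _ _ => hg.1 _ _
    calc ‖g i 0‖ * ‖(g.submatrix i.succAbove Fin.succ).det‖ ≤ (p:ℝ)⁻¹ * 1 :=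
          mul_le_mul (key i) h2 (norm_nonneg _) (by positivity)
      _ = (p:ℝ)⁻¹ := mul_one _
  rw [hg.2.1] at hd
  exact absurd hd (not_le.2 pinv_lt_one)

lemma lu : ∀ (n : ℕ) {r : ℕ} (b : Fin n → Fin r), Monotone b →
    ∀ g : Matrix (Fin n) (Fin n) ℚ_[p], g ∈ Parahoric p b →
    ∃ L U, L ∈ Parahoric p b ∧ U ∈ Parahoric p b ∧ BL p b L ∧ BU p b U ∧ g = L * U := by
  intro n
  induction n with
  | zero =>
    intro r b hb g hg
    refine ⟨1, 1, one_mem, one_mem, fun i => i.elim0, fun i => i.elim0, ?_⟩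
    apply Subsingleton.elim
  | succ m ih =>
    intro r b hb g hg
    obtain ⟨k, hk, hgk⟩ := pivot hb hg
    set σ := Equiv.swap (0 : Fin (m+1)) k with hσ
    have hbσ : ∀ i, b (σ i) = b i := by
      intro i
      rcases eq_or_ne i 0 with h0 | h0
      · subst h0; rw [hσ]; simp [Equiv.swap_apply_left, hk]
      rcases eq_or_ne i k with hk' | hk'
      · subst hk'; rw [hσ]; simp [Equiv.swap_apply_right, hk]
      · rw [hσ, Equiv.swap_apply_of_ne_of_ne h0 hk']
    set P : Matrix (Fin (m+1)) (Fin (m+1)) ℚ_[p] := σ.toPEquiv.toMatrix with hP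
    have hPapp : ∀ i j, P i j = if σ i = j then 1 else 0 := by
      intro i j; rw [hP, PEquiv.toMatrix_toPEquiv_apply, Pi.single_apply]; exact if_congr eq_comm rfl rfl
    have hPne : ∀ i j, b i ≠ b j → P i j = 0 := by
      intro i j hij
      have hne : σ i ≠ j := fun h => hij (by rw [← h, hbσ])
      rw [hPapp, if_neg hne]
    have hPmem : P ∈ Parahoric p b := by
      refine ⟨fun i j => ?_, ?_, fun i j hij => ?_⟩
      · rw [hPapp]; split_ifs <;> simp
      · rw [hP]
        rcases Int.units_eq_one_or (Equiv.Perm.sign σ) with h | h <;>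
          rw [show (σ.toPEquiv.toMatrix : Matrix (Fin (m+1)) (Fin (m+1)) ℚ_[p]) =
              σ.permMatrix ℚ_[p] from rfl, Matrix.det_permutation, h] <;> simp
      · rw [hPne i j (fun h => absurd hij (by rw [h]; exact lt_irrefl _))]
        simp only [norm_zero]; positivity
    have hPBL : BL p b P := fun i j hij => hPne i j (ne_of_lt hij)
    set g₁ := g.submatrix σ id with hg₁def
    have hg₁app : ∀ i j, g₁ i j = g (σ i) j := fun i j => rfl
    have hPg : P * g₁ = g := by
      rw [hP, hg₁def, PEquiv.toMatrix_toPEquiv_mul]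
      ext i j
      rw [Matrix.submatrix_apply, Matrix.submatrix_apply, hσ]
      simp [Equiv.swap_apply_self]
    have hg₁mem : g₁ ∈ Parahoric p b := by
      refine ⟨fun i j => ?_, ?_, fun i j hij => ?_⟩
      · rw [hg₁app]; exact hg.1 _ _
      · rw [hg₁def, Matrix.det_permute]
        rcases Int.units_eq_one_or (Equiv.Perm.sign σ) with h | h <;> rw [h] <;>
          simpa using hg.2.1
      · rw [hg₁app]; exact hg.2.2 (σ i) j (by rwa [hbσ])
    have hg₁00 : ‖g₁ 0 0‖ = 1 := by
      rw [hg₁app]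
      rw [hσ]
      simpa [Equiv.swap_apply_left] using hgk
    have h00ne : g₁ 0 0 ≠ 0 := by
      intro h; rw [h] at hg₁00; simp at hg₁00
    set e : Fin (m+1) → ℚ_[p] := fun i => if i = 0 then 0 else g₁ i 0 / g₁ 0 0 with he
    have he0 : e 0 = 0 := by simp [he]
    have heb : ∀ i, ‖e i‖ = if i = 0 then 0 else ‖g₁ i 0‖ := by
      intro i
      by_cases hi : i = 0
      · simp [he, hi]
      · rw [he]; simp only [hi, if_false]
        rw [norm_div, hg₁00, div_one]
    have he1 : ∀ i, ‖e i‖ ≤ 1 := by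
      intro i; rw [heb]; split_ifs
      · simp
      · exact hg₁mem.1 _ _
    have helow : ∀ i, b 0 < b i → ‖e i‖ ≤ (p:ℝ)⁻¹ := by
      intro i hi
      have hne : i ≠ 0 := fun h => absurd hi (by rw [h]; exact lt_irrefl _)
      rw [heb, if_neg hne]
      exact hg₁mem.2.2 i 0 hi
    set L₁ : Matrix (Fin (m+1)) (Fin (m+1)) ℚ_[p] := 1 + colMat e with hL₁
    set g₂ : Matrix (Fin (m+1)) (Fin (m+1)) ℚ_[p] := (1 + colMat (fun i => -e i)) * g₁ with hg₂def
    have hL₁g₂ : L₁ * g₂ = g₁ := by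
      rw [hL₁, hg₂def, ← Matrix.mul_assoc, one_add_colMat_mul e he0, Matrix.one_mul]
    have hg₂app : ∀ i j, g₂ i j = g₁ i j - e i * g₁ 0 j := by
      intro i j
      rw [hg₂def, Matrix.add_mul, Matrix.one_mul, Matrix.add_apply, colMat_mul_apply]
      ring
    have hg₂col : ∀ i : Fin m, g₂ i.succ 0 = 0 := by
      intro i
      rw [hg₂app, he]
      simp only [Fin.succ_ne_zero, if_false]
      rw [div_mul_cancel₀ _ h00ne]
      ring
    have hg₂00 : g₂ 0 0 = g₁ 0 0 := by rw [hg₂app, he0]; ring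
    have hL₁mem : L₁ ∈ Parahoric p b := by
      refine ⟨fun i j => ?_, ?_, fun i j hij => ?_⟩
      · rw [hL₁, Matrix.add_apply]
        refine (IsUltrametricDist.norm_add_le_max _ _).trans (max_le ?_ ?_)
        · rw [Matrix.one_apply]; split_ifs <;> simp
        · rw [colMat_apply]; split_ifs
          · exact he1 _
          · simp
      · rw [hL₁, colMat_det e he0]; simp
      · have hne : i ≠ j := fun h => absurd hij (by rw [h]; exact lt_irrefl _)
        rw [hL₁, Matrix.add_apply, Matrix.one_apply_ne hne, zero_add, colMat_apply]
        split_ifs with hj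
        · subst hj; exact helow i hij
        · simp only [norm_zero]; positivity
    have hL₁BL : BL p b L₁ := by
      intro i j hij
      have hne : i ≠ j := fun h => absurd hij (by rw [h]; exact lt_irrefl _)
      have hj0 : j ≠ 0 := by
        intro h; subst h
        exact absurd (lt_of_le_of_lt (hb (Fin.zero_le i)) hij) (lt_irrefl _)
      rw [hL₁, Matrix.add_apply, Matrix.one_apply_ne hne, zero_add, colMat_apply, if_neg hj0]
    have hg₂mem : g₂ ∈ Parahoric p b := by
      refine ⟨fun i j => ?_, ?_, fun i j hij => ?_⟩
      · rw [hg₂app]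
        refine norm_ultra_sub (hg₁mem.1 _ _) ?_
        rw [norm_mul]
        simpa using mul_le_mul (he1 i) (hg₁mem.1 0 j) (norm_nonneg _) zero_le_one
      · rw [hg₂def, Matrix.det_mul, norm_mul,
          show ((1 : Matrix (Fin (m+1)) (Fin (m+1)) ℚ_[p]) + colMat (fun i => -e i)).det = 1 from
            colMat_det _ (by simp [he0]), hg₁mem.2.1]
        simp
      · rw [hg₂app]
        refine norm_ultra_sub (hg₁mem.2.2 i j hij) ?_
        rw [norm_mul]
        have hbi : b 0 < b i := lt_of_le_of_lt (hb (Fin.zero_le j)) hij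
        calc ‖e i‖ * ‖g₁ 0 j‖ ≤ (p:ℝ)⁻¹ * 1 :=
              mul_le_mul (helow i hbi) (hg₁mem.1 0 j) (norm_nonneg _) (by positivity)
          _ = (p:ℝ)⁻¹ := mul_one _
    set C := g₂.submatrix Fin.succ Fin.succ with hC
    set b' : Fin m → Fin r := b ∘ Fin.succ with hb'def
    have hb' : Monotone b' := fun x y hxy => hb (Fin.succ_le_succ_iff.mpr hxy)
    have hdet₂ : g₂.det = g₂ 0 0 * C.det := by
      rw [Matrix.det_succ_column_zero, Fin.sum_univ_succ]
      simp [hg₂col, Fin.succAbove_zero, hC]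
    have hCmem : C ∈ Parahoric p b' := by
      refine ⟨fun i j => hg₂mem.1 _ _, ?_, fun i j hij => hg₂mem.2.2 _ _ hij⟩
      have h1 : ‖g₂.det‖ = ‖C.det‖ := by
        rw [hdet₂, norm_mul, hg₂00, hg₁00, one_mul]
      rw [← h1, hg₂mem.2.1]
    obtain ⟨L'', U'', hL''m, hU''m, hL''bl, hU''bu, hCLU⟩ := ih b' hb' C hCmem
    set L₃ := emb (1 : ℚ_[p]) 0 L'' with hL₃
    set U₃ := emb (g₂ 0 0) (fun j => g₂ 0 j.succ) U'' with hU₃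
    have hg₂LU : g₂ = L₃ * U₃ := by
      ext i j
      rw [Matrix.mul_apply, Fin.sum_univ_succ]
      rcases Fin.eq_zero_or_eq_succ i with rfl | ⟨i', rfl⟩ <;>
        rcases Fin.eq_zero_or_eq_succ j with rfl | ⟨j', rfl⟩
      · simp [hL₃, hU₃]
      · simp [hL₃, hU₃]
      · simp [hL₃, hU₃, hg₂col]
      · simp only [hL₃, hU₃, emb_succ_zero, emb_succ_succ, zero_mul, zero_add]
        have h2 := congrFun (congrFun hCLU i') j'
        rw [Matrix.mul_apply] at h2
        exact h2
    have hU₃mem : U₃ ∈ Parahoric p b := by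
      refine ⟨fun i j => ?_, ?_, fun i j hij => ?_⟩
      · rcases Fin.eq_zero_or_eq_succ i with rfl | ⟨i', rfl⟩ <;>
          rcases Fin.eq_zero_or_eq_succ j with rfl | ⟨j', rfl⟩
        · rw [hU₃]; rw [show (emb (g₂ 0 0) (fun j => g₂ 0 j.succ) U'') 0 0 = g₂ 0 0 from rfl]
          exact hg₂mem.1 0 0
        · rw [hU₃, emb_zero_succ]; exact hg₂mem.1 0 _
        · rw [hU₃, emb_succ_zero]; simp
        · rw [hU₃, emb_succ_succ]; exact hU''m.1 _ _
      · rw [hU₃, emb_det, norm_mul, hg₂00, hg₁00, hU''m.2.1, one_mul]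
      · rcases Fin.eq_zero_or_eq_succ i with rfl | ⟨i', rfl⟩ <;>
          rcases Fin.eq_zero_or_eq_succ j with rfl | ⟨j', rfl⟩
        · exact absurd hij (lt_irrefl _)
        · exact absurd (lt_of_lt_of_le hij (hb (Fin.zero_le _))) (lt_irrefl _)
        · rw [hU₃, emb_succ_zero]; simp only [norm_zero]; positivity
        · rw [hU₃, emb_succ_succ]; exact hU''m.2.2 _ _ hij
    have hU₃BU : BU p b U₃ := by
      intro i j hij
      rcases Fin.eq_zero_or_eq_succ i with rfl | ⟨i', rfl⟩ <;>
        rcases Fin.eq_zero_or_eq_succ j with rfl | ⟨j', rfl⟩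
      · exact absurd hij (lt_irrefl _)
      · exact absurd (lt_of_lt_of_le hij (hb (Fin.zero_le _))) (lt_irrefl _)
      · rw [hU₃, emb_succ_zero]
      · rw [hU₃, emb_succ_succ]; exact hU''bu _ _ hij
    have hL₃mem : L₃ ∈ Parahoric p b := by
      refine ⟨fun i j => ?_, ?_, fun i j hij => ?_⟩
      · rcases Fin.eq_zero_or_eq_succ i with rfl | ⟨i', rfl⟩ <;>
          rcases Fin.eq_zero_or_eq_succ j with rfl | ⟨j', rfl⟩
        · rw [hL₃]; rw [show (emb (1:ℚ_[p]) 0 L'') 0 0 = 1 from rfl]; simp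
        · rw [hL₃, emb_zero_succ]; simp
        · rw [hL₃, emb_succ_zero]; simp
        · rw [hL₃, emb_succ_succ]; exact hL''m.1 _ _
      · rw [hL₃, emb_det, one_mul]; exact hL''m.2.1
      · rcases Fin.eq_zero_or_eq_succ i with rfl | ⟨i', rfl⟩ <;>
          rcases Fin.eq_zero_or_eq_succ j with rfl | ⟨j', rfl⟩
        · exact absurd hij (lt_irrefl _)
        · exact absurd (lt_of_lt_of_le hij (hb (Fin.zero_le _))) (lt_irrefl _)
        · rw [hL₃, emb_succ_zero]; simp only [norm_zero]; positivity
        · rw [hL₃, emb_succ_succ]; exact hL''m.2.2 _ _ hij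
    have hL₃BL : BL p b L₃ := by
      intro i j hij
      rcases Fin.eq_zero_or_eq_succ i with rfl | ⟨i', rfl⟩ <;>
        rcases Fin.eq_zero_or_eq_succ j with rfl | ⟨j', rfl⟩
      · exact absurd hij (lt_irrefl _)
      · rw [hL₃, emb_zero_succ]; simp
      · rw [hL₃, emb_succ_zero]
      · rw [hL₃, emb_succ_succ]; exact hL''bl _ _ hij
    refine ⟨P * L₁ * L₃, U₃, mul_mem (mul_mem hPmem hL₁mem) hL₃mem, hU₃mem,
      BL.mul (BL.mul hPBL hL₁BL) hL₃BL, hU₃BU, ?_⟩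
    rw [Matrix.mul_assoc (P * L₁) L₃ U₃, ← hg₂LU, Matrix.mul_assoc P L₁ g₂, hL₁g₂, hPg]

lemma tdiag_mul_tdiag (μ ν : Fin n → ℤ) :
    tdiag p μ * tdiag p ν = tdiag p (fun i => μ i + ν i) := by
  rw [tdiag, tdiag, tdiag, Matrix.diagonal_mul_diagonal]
  have hne : (p:ℚ_[p]) ≠ 0 := by exact_mod_cast (Fact.out : p.Prime).ne_zero
  have h : ∀ i : Fin n, (p:ℚ_[p]) ^ μ i * (p:ℚ_[p]) ^ ν i = (p:ℚ_[p]) ^ (μ i + ν i) :=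
    fun i => (zpow_add₀ hne _ _).symm
  simp only [h]

lemma tdiag_mul_neg (μ : Fin n → ℤ) : tdiag p μ * tdiag p (fun i => -μ i) = 1 := by
  rw [tdiag_mul_tdiag]
  have : (fun i => μ i + -μ i) = fun _ : Fin n => (0:ℤ) := by funext i; ring
  rw [this, tdiag]
  simp [Matrix.diagonal_one]

lemma tdiag_neg_mul (μ : Fin n → ℤ) : tdiag p (fun i => -μ i) * tdiag p μ = 1 := by
  have := tdiag_mul_tdiag (p := p) (fun i => -μ i) μ
  rw [this]
  have h2 : (fun i => -μ i + μ i) = fun _ : Fin n => (0:ℤ) := by funext i; ring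
  rw [h2, tdiag]
  simp [Matrix.diagonal_one]

lemma mu_mono (hb : Monotone b) {μ : Fin n → ℤ} (hμ : Monotone μ)
    (hc : ∀ i i', b i = b i' → μ i = μ i') {i j : Fin n} (h : b j ≤ b i) : μ j ≤ μ i := by
  rcases eq_or_lt_of_le h with he | hlt
  · exact (hc j i he).le
  · have hji : j < i := by
      by_contra hji
      push_neg at hji
      exact absurd hlt (not_lt.2 (hb hji))
    exact hμ hji.le

lemma conj_norm_le {μ : Fin n → ℤ} {M : Matrix (Fin n) (Fin n) ℚ_[p]} {i j : Fin n}
    (h : M i j ≠ 0 → μ j ≤ μ i) :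
    ‖(tdiag p μ * M * tdiag p (fun i => -μ i)) i j‖ ≤ ‖M i j‖ := by
  have hent : (tdiag p μ * M * tdiag p (fun i => -μ i)) i j
      = (p:ℚ_[p])^(μ i) * M i j * (p:ℚ_[p])^(-μ j) := by
    rw [tdiag, tdiag, Matrix.mul_diagonal, Matrix.diagonal_mul]
  by_cases h0 : M i j = 0
  · rw [hent, h0]; simp
  · have hμji := h h0
    rw [hent, norm_mul, norm_mul, Padic.norm_p_zpow, Padic.norm_p_zpow]
    have hp1 : (1:ℝ) ≤ (p:ℝ) := by exact_mod_cast (Fact.out : p.Prime).one_le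
    have hfac : (p:ℝ)^(-μ i) * (p:ℝ)^(-(-μ j)) ≤ 1 := by
      rw [← zpow_add₀ (by positivity : (p:ℝ) ≠ 0)]
      exact zpow_le_one_of_nonpos₀ hp1 (by omega)
    calc (p:ℝ)^(-μ i) * ‖M i j‖ * (p:ℝ)^(-(-μ j))
        = ((p:ℝ)^(-μ i) * (p:ℝ)^(-(-μ j))) * ‖M i j‖ := by ring
      _ ≤ 1 * ‖M i j‖ := mul_le_mul_of_nonneg_right hfac (norm_nonneg _)
      _ = ‖M i j‖ := one_mul _

lemma conj_det {μ : Fin n → ℤ} (M : Matrix (Fin n) (Fin n) ℚ_[p]) :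
    (tdiag p μ * M * tdiag p (fun i => -μ i)).det = M.det := by
  rw [Matrix.det_mul, Matrix.det_mul]
  have h1 : (tdiag p μ).det * (tdiag p (fun i => -μ i)).det = 1 := by
    rw [← Matrix.det_mul, tdiag_mul_neg, Matrix.det_one]
  calc (tdiag p μ).det * M.det * (tdiag p (fun i => -μ i)).det
      = ((tdiag p μ).det * (tdiag p (fun i => -μ i)).det) * M.det := by ring
    _ = M.det := by rw [h1, one_mul]

lemma conjL (hb : Monotone b) {μ : Fin n → ℤ} (hμ : Monotone μ)
    (hc : ∀ i i', b i = b i' → μ i = μ i')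
    {L : Matrix (Fin n) (Fin n) ℚ_[p]} (hL : L ∈ Parahoric p b) (hBL : BL p b L) :
    tdiag p μ * L * tdiag p (fun i => -μ i) ∈ Parahoric p b := by
  have hkey : ∀ i j, ‖(tdiag p μ * L * tdiag p (fun i => -μ i)) i j‖ ≤ ‖L i j‖ := by
    intro i j
    apply conj_norm_le
    intro h0
    have hbji : b j ≤ b i := by
      by_contra hh
      push_neg at hh
      exact h0 (hBL i j hh)
    exact mu_mono hb hμ hc hbji
  refine ⟨fun i j => (hkey i j).trans (hL.1 i j), ?_,
    fun i j hij => (hkey i j).trans (hL.2.2 i j hij)⟩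
  rw [conj_det, hL.2.1]

lemma conjU (hb : Monotone b) {μ : Fin n → ℤ} (hμ : Monotone μ)
    (hc : ∀ i i', b i = b i' → μ i = μ i')
    {U : Matrix (Fin n) (Fin n) ℚ_[p]} (hU : U ∈ Parahoric p b) (hBU : BU p b U) :
    tdiag p (fun i => -μ i) * U * tdiag p μ ∈ Parahoric p b := by
  have h2 : tdiag p (fun i => -μ i) * U * tdiag p μ
      = tdiag p (fun i => -μ i) * U * tdiag p (fun i => -(-μ i)) := by
    congr 1
    congr 1
    funext i
    ring
  rw [h2]
  have hkey : ∀ i j, ‖(tdiag p (fun i => -μ i) * U * tdiag p (fun i => -(-μ i))) i j‖ ≤ ‖U i j‖ := by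
    intro i j
    apply conj_norm_le
    intro h0
    have hbij : b i ≤ b j := by
      by_contra hh
      push_neg at hh
      exact h0 (hBU i j hh)
    have := mu_mono hb hμ hc hbij
    omega
  refine ⟨fun i j => (hkey i j).trans (hU.1 i j), ?_,
    fun i j hij => (hkey i j).trans (hU.2.2 i j hij)⟩
  rw [conj_det, hU.2.1]

end S7

open S7 in
/-- double coset identity from the proof of Lemma 2.21, `GL_n` case:
for `μ₁, μ₂` antidominant and constant on blocks, `𝒫 h₁ 𝒫 h₂ 𝒫 = 𝒫 h₁h₂ 𝒫` where
`h_a = t_{μ_a}`. -/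
theorem statement7 (p : ℕ) [Fact p.Prime] (n r : ℕ)
    (b : Fin n → Fin r) (hb : Monotone b) (hbs : Function.Surjective b)
    (μ₁ μ₂ : Fin n → ℤ) (hμ₁m : Monotone μ₁) (hμ₂m : Monotone μ₂)
    (hμ₁b : ∀ i i' : Fin n, b i = b i' → μ₁ i = μ₁ i')
    (hμ₂b : ∀ i i' : Fin n, b i = b i' → μ₂ i = μ₂ i') :
    Parahoric p b * {tdiag p μ₁} * Parahoric p b * {tdiag p μ₂} * Parahoric p b =
      Parahoric p b * {tdiag p μ₁ * tdiag p μ₂} * Parahoric p b := by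
  apply Set.Subset.antisymm
  · rintro x ⟨w, hw, v, hv, rfl⟩
    obtain ⟨w2, hw2, h2, hh2, rfl⟩ := hw
    obtain ⟨w3, hw3, g, hg, rfl⟩ := hw2
    obtain ⟨u, hu, h1, hh1, rfl⟩ := hw3
    rw [Set.mem_singleton_iff] at hh1 hh2
    subst hh1; subst hh2
    obtain ⟨L, U, hLm, hUm, hBL, hBU, rfl⟩ := lu n b hb g hg
    set L' := tdiag p μ₁ * L * tdiag p (fun i => -μ₁ i) with hL'
    set U' := tdiag p (fun i => -μ₂ i) * U * tdiag p μ₂ with hU'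
    have hL'mem : L' ∈ Parahoric p b := conjL hb hμ₁m hμ₁b hLm hBL
    have hU'mem : U' ∈ Parahoric p b := conjU hb hμ₂m hμ₂b hUm hBU
    have heq : u * tdiag p μ₁ * (L * U) * tdiag p μ₂ * v
        = (u * L') * (tdiag p μ₁ * tdiag p μ₂) * (U' * v) := by
      have c1 : ∀ X : Matrix (Fin n) (Fin n) ℚ_[p],
          tdiag p (fun i => -μ₁ i) * (tdiag p μ₁ * X) = X := by
        intro X
        rw [← Matrix.mul_assoc, tdiag_neg_mul, Matrix.one_mul]
      have c2 : ∀ X : Matrix (Fin n) (Fin n) ℚ_[p],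
          tdiag p μ₂ * (tdiag p (fun i => -μ₂ i) * X) = X := by
        intro X
        rw [← Matrix.mul_assoc, tdiag_mul_neg, Matrix.one_mul]
      rw [hL', hU']
      simp only [Matrix.mul_assoc]
      rw [c1, c2]
    show u * tdiag p μ₁ * (L * U) * tdiag p μ₂ * v ∈ _
    rw [heq]
    exact Set.mul_mem_mul (Set.mul_mem_mul (mul_mem hu hL'mem) (Set.mem_singleton _))
      (mul_mem hU'mem hv)
  · rintro x ⟨w, hw, v, hv, rfl⟩
    obtain ⟨u, hu, h12, hh12, rfl⟩ := hw
    rw [Set.mem_singleton_iff] at hh12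
    subst hh12
    have heq : u * (tdiag p μ₁ * tdiag p μ₂) * v
        = u * tdiag p μ₁ * 1 * tdiag p μ₂ * v := by
      simp only [Matrix.mul_one, Matrix.mul_assoc]
    show u * (tdiag p μ₁ * tdiag p μ₂) * v ∈ _
    rw [heq]
    exact Set.mul_mem_mul (Set.mul_mem_mul (Set.mul_mem_mul
      (Set.mul_mem_mul hu (Set.mem_singleton _)) one_mem) (Set.mem_singleton _)) hv
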